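/- arXiv:2402.05841 — 4 statements merged into one kernel-verified Lean document; each statement's English description precedes it below -/
import Mathlib

section
/- Let c > 0, a > 0, and x ∈ (0,1). Then the following interchange of derivatives holds: ∂/∂x [ Ĩ_x(a, c) ] = ∂/∂a [ x^{a−1}(1−x)^{c−1} / B(a,c) ], i.e., the x-derivative of the a-derivative of the regularized incomplete beta function I_x(a,c) equals the a-derivative of the beta density x^{a−1}(1−x)^{c−1}/B(a,c); in particular, both derivatives exist. -/
set_option maxHeartbeats 1000000

open Real MeasureTheory Set Metric Filter intervalIntegral

/-- The incomplete beta function `B(x; a, c) = ∫_0^x s^{a-1}(1-s)^{c-1} ds`. -/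
noncomputable def incBeta (x a c : ℝ) : ℝ := ∫ s in (0:ℝ)..x, s ^ (a - 1) * (1 - s) ^ (c - 1)

/-- The regularized incomplete beta function `I_x(a, c) = B(x; a, c) / B(a, c)`. -/
noncomputable def regIncBeta (x a c : ℝ) : ℝ := incBeta x a c / incBeta 1 a c

lemma measurable_betaKer (p q : ℝ) : Measurable fun s : ℝ => s ^ p * (1 - s) ^ q :=
  (measurable_id'.pow_const p).mul ((measurable_const.sub measurable_id').pow_const q)

lemma measurable_betaKerLog (p q : ℝ) :
    Measurable fun s : ℝ => s ^ p * Real.log s * (1 - s) ^ q :=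
  ((measurable_id'.pow_const p).mul Real.measurable_log).mul
    ((measurable_const.sub measurable_id').pow_const q)

/-- For `s ∈ (0,1]` and `ε > 0`, `|log s| ≤ ε⁻¹ * s ^ (-ε)`. -/
lemma abs_log_le_rpow {s ε : ℝ} (h0 : 0 < s) (h1 : s ≤ 1) (hε : 0 < ε) :
    |Real.log s| ≤ ε⁻¹ * s ^ (-ε) := by
  have hlog : Real.log s ≤ 0 := Real.log_nonpos h0.le h1
  rw [abs_of_nonpos hlog]
  have h2 : Real.log (s ^ (-ε)) ≤ s ^ (-ε) := by
    have := Real.log_le_sub_one_of_pos (Real.rpow_pos_of_pos h0 (-ε))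
    linarith
  rw [Real.log_rpow h0] at h2
  rw [← mul_le_mul_iff_right₀ hε, ← mul_assoc, mul_inv_cancel₀ hε.ne', one_mul]
  linarith

/-- Integrability of the beta kernel on `(0, 1]`. -/
lemma integrableOn_beta_ker {p q : ℝ} (hp : -1 < p) (hq : -1 < q) :
    IntegrableOn (fun s : ℝ => s ^ p * (1 - s) ^ q) (Ioc (0:ℝ) 1) := by
  have hmeas := measurable_betaKer p q
  have hsplit : Ioc (0:ℝ) 1 = Ioc 0 (1/2) ∪ Ioc (1/2) 1 :=
    (Ioc_union_Ioc_eq_Ioc (by norm_num) (by norm_num)).symm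
  rw [hsplit, integrableOn_union]
  constructor
  · -- near 0
    have hint : IntegrableOn (fun s : ℝ => max 1 ((1/2:ℝ)^q) * s ^ p) (Ioc (0:ℝ) (1/2)) := by
      rw [← intervalIntegrable_iff_integrableOn_Ioc_of_le (by norm_num)]
      exact (intervalIntegrable_rpow' hp).const_mul _
    refine Integrable.mono' hint (hmeas.aestronglyMeasurable) ?_
    filter_upwards [ae_restrict_mem measurableSet_Ioc] with s hs
    have hs0 : 0 < s := hs.1
    have hs1 : s ≤ 1/2 := hs.2
    have h1s : (0:ℝ) < 1 - s := by linarith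
    have hb : (1 - s) ^ q ≤ max 1 ((1/2:ℝ)^q) := by
      rcases le_or_gt 0 q with h | h
      · exact le_trans (Real.rpow_le_one h1s.le (by linarith) h) (le_max_left _ _)
      · exact le_trans (Real.rpow_le_rpow_of_nonpos (by norm_num) (by linarith) h.le)
          (le_max_right _ _)
    rw [Real.norm_eq_abs, abs_of_nonneg (mul_nonneg (Real.rpow_nonneg hs0.le _)
      (Real.rpow_nonneg h1s.le _))]
    calc s ^ p * (1 - s) ^ q ≤ s ^ p * max 1 ((1/2:ℝ)^q) :=
          mul_le_mul_of_nonneg_left hb (Real.rpow_nonneg hs0.le _)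
      _ = max 1 ((1/2:ℝ)^q) * s ^ p := mul_comm _ _
  · -- near 1
    have hint : IntegrableOn (fun s : ℝ => max 1 ((1/2:ℝ)^p) * (1 - s) ^ q)
        (Ioc (1/2:ℝ) 1) := by
      rw [← intervalIntegrable_iff_integrableOn_Ioc_of_le (by norm_num)]
      have h0 : IntervalIntegrable (fun u : ℝ => u ^ q) volume 0 (1/2) :=
        intervalIntegrable_rpow' hq
      have h1 := h0.comp_sub_left 1
      norm_num at h1
      exact h1.symm.const_mul _
    refine Integrable.mono' hint (hmeas.aestronglyMeasurable) ?_
    filter_upwards [ae_restrict_mem measurableSet_Ioc] with s hs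
    have hs0 : (1/2:ℝ) < s := hs.1
    have hs1 : s ≤ 1 := hs.2
    have h1s : (0:ℝ) ≤ 1 - s := by linarith
    have hb : s ^ p ≤ max 1 ((1/2:ℝ)^p) := by
      rcases le_or_gt 0 p with h | h
      · exact le_trans (Real.rpow_le_one (by linarith) hs1 h) (le_max_left _ _)
      · exact le_trans (Real.rpow_le_rpow_of_nonpos (by norm_num) hs0.le h.le)
          (le_max_right _ _)
    rw [Real.norm_eq_abs, abs_of_nonneg (mul_nonneg (Real.rpow_nonneg (by linarith) _)
      (Real.rpow_nonneg h1s _))]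
    exact mul_le_mul_of_nonneg_right hb (Real.rpow_nonneg h1s _)

lemma intervalIntegrable_beta_ker {p q : ℝ} (hp : -1 < p) (hq : -1 < q)
    {x : ℝ} (h0 : 0 < x) (h1 : x ≤ 1) :
    IntervalIntegrable (fun s : ℝ => s ^ p * (1 - s) ^ q) volume 0 x := by
  rw [intervalIntegrable_iff_integrableOn_Ioc_of_le h0.le]
  exact (integrableOn_beta_ker hp hq).mono_set (Ioc_subset_Ioc_right h1)

/-- Differentiation in the parameter `a` under the integral sign. -/
lemma hasDerivAt_incBeta_param {c a : ℝ} (hc : 0 < c) (ha : 0 < a)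
    {x : ℝ} (h0 : 0 < x) (h1 : x ≤ 1) :
    IntervalIntegrable (fun s : ℝ => s ^ (a-1) * Real.log s * (1-s) ^ (c-1)) volume 0 x ∧
    HasDerivAt (fun a' => incBeta x a' c)
      (∫ s in (0:ℝ)..x, s ^ (a-1) * Real.log s * (1-s) ^ (c-1)) a := by
  have hIoc : Set.uIoc (0:ℝ) x = Ioc 0 x := uIoc_of_le h0.le
  have key := intervalIntegral.hasDerivAt_integral_of_dominated_loc_of_deriv_le
    (F := fun a' s => s ^ (a'-1) * (1-s) ^ (c-1))
    (F' := fun a' s => s ^ (a'-1) * Real.log s * (1-s) ^ (c-1))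
    (a := (0:ℝ)) (b := x) (x₀ := a)
    (bound := fun s => (4/a) * (s ^ (a/2 - 1) * (1-s) ^ (c-1)))
    (s := ball a (a/4)) (ball_mem_nhds a (by positivity))
    (Filter.Eventually.of_forall fun a' =>
      (measurable_betaKer (a'-1) (c-1)).aestronglyMeasurable)
    (intervalIntegrable_beta_ker (by linarith) (by linarith) h0 h1)
    ((measurable_betaKerLog (a-1) (c-1)).aestronglyMeasurable)
    ?_ ?_ ?_
  · exact ⟨key.1, key.2⟩
  · -- bound
    refine Filter.Eventually.of_forall fun s hs a' ha' => ?_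
    rw [hIoc] at hs
    have hs0 : 0 < s := hs.1
    have hs1 : s ≤ 1 := le_trans hs.2 h1
    have h1s : (0:ℝ) ≤ 1 - s := by linarith
    have hd : |a' - a| < a/4 := by rw [← Real.dist_eq]; exact mem_ball.mp ha'
    have ha'1 : 3*a/4 - 1 ≤ a' - 1 := by
      have := (abs_lt.mp hd).1; linarith
    have hb1 : s ^ (a'-1) ≤ s ^ (3*a/4 - 1) :=
      Real.rpow_le_rpow_of_exponent_ge hs0 hs1 ha'1
    have hb2 : |Real.log s| ≤ (4/a) * s ^ (-(a/4)) := by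
      have h := abs_log_le_rpow hs0 hs1 (show (0:ℝ) < a/4 by positivity)
      rwa [show ((a/4):ℝ)⁻¹ = 4/a by field_simp] at h
    rw [Real.norm_eq_abs, abs_mul, abs_mul, abs_of_nonneg (Real.rpow_nonneg hs0.le _),
      abs_of_nonneg (Real.rpow_nonneg h1s _)]
    have step : s ^ (a'-1) * |Real.log s| ≤ (4/a) * s ^ (a/2 - 1) := by
      calc s ^ (a'-1) * |Real.log s|
          ≤ s ^ (3*a/4 - 1) * ((4/a) * s ^ (-(a/4))) :=
            mul_le_mul hb1 hb2 (abs_nonneg _) (Real.rpow_nonneg hs0.le _)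
        _ = (4/a) * (s ^ (3*a/4 - 1) * s ^ (-(a/4))) := by ring
        _ = (4/a) * s ^ (a/2 - 1) := by
            rw [← Real.rpow_add hs0, show 3*a/4 - 1 + -(a/4) = a/2 - 1 from by ring]
    calc s ^ (a'-1) * |Real.log s| * (1-s) ^ (c-1)
        ≤ (4/a) * s ^ (a/2 - 1) * (1-s) ^ (c-1) :=
          mul_le_mul_of_nonneg_right step (Real.rpow_nonneg h1s _)
      _ = (4/a) * (s ^ (a/2 - 1) * (1-s) ^ (c-1)) := by ring
  · -- bound integrable
    exact (intervalIntegrable_beta_ker (by linarith) (by linarith) h0 h1).const_mul _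
  · -- differentiability
    refine Filter.Eventually.of_forall fun s hs a' _ => ?_
    rw [hIoc] at hs
    have hs0 : 0 < s := hs.1
    have hd : HasDerivAt (fun a'' : ℝ => s ^ (a''-1)) (s ^ (a'-1) * Real.log s) a' := by
      have h := (Real.hasStrictDerivAt_const_rpow hs0 (a'-1)).hasDerivAt
      have h2 := h.comp a' ((hasDerivAt_id a').sub_const 1)
      simpa [Function.comp_def] using h2
    exact hd.mul_const ((1-s) ^ (c-1))

/-- The interchange of derivatives
`∂/∂x [ Ĩ_x(a,c) ] = ∂/∂a [ x^{a-1}(1-x)^{c-1} / B(a,c) ]`, where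
`Ĩ_x(a,c) = ∂I_x(a,c)/∂a`; in particular both derivatives exist (witnessed by
a common value `D`). -/
theorem deriv_swap_regIncBeta (c a x : ℝ) (hc : 0 < c) (ha : 0 < a)
    (hx0 : 0 < x) (hx1 : x < 1) :
    ∃ D : ℝ,
      HasDerivAt (fun a' : ℝ => x ^ (a' - 1) * (1 - x) ^ (c - 1) / incBeta 1 a' c) D a
      ∧ HasDerivAt (fun x' : ℝ => deriv (fun a' : ℝ => regIncBeta x' a' c) a) D x := by
  have h1x : (0:ℝ) < 1 - x := by linarith
  obtain ⟨hJ1_int, hB_deriv⟩ := hasDerivAt_incBeta_param hc ha one_pos le_rfl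
  have hBpos : 0 < incBeta 1 a c := by
    rw [incBeta]
    refine intervalIntegral.intervalIntegral_pos_of_pos_on
      (intervalIntegrable_beta_ker (by linarith) (by linarith) one_pos le_rfl) ?_ one_pos
    intro s hs
    have hs0 : (0:ℝ) < s := hs.1
    have hs1 : (0:ℝ) < 1 - s := by linarith [hs.2]
    positivity
  have hBne : incBeta 1 a c ≠ 0 := hBpos.ne'
  refine ⟨((x ^ (a-1) * Real.log x * (1-x) ^ (c-1)) * incBeta 1 a c
      - (x ^ (a-1) * (1-x) ^ (c-1))
        * ∫ s in (0:ℝ)..1, s ^ (a-1) * Real.log s * (1-s) ^ (c-1)) / incBeta 1 a c ^ 2, ?_, ?_⟩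
  · -- first derivative
    have hnum : HasDerivAt (fun a' : ℝ => x ^ (a'-1) * (1-x) ^ (c-1))
        (x ^ (a-1) * Real.log x * (1-x) ^ (c-1)) a := by
      have h := (Real.hasStrictDerivAt_const_rpow hx0 (a-1)).hasDerivAt
      have h2 := h.comp a ((hasDerivAt_id a).sub_const 1)
      have h3 : HasDerivAt (fun a' : ℝ => x ^ (a'-1)) (x ^ (a-1) * Real.log x) a := by
        simpa [Function.comp_def] using h2
      exact h3.mul_const _
    exact hnum.div hB_deriv hBne
  · -- second derivative
    have hg : ∀ x' ∈ Ioo (0:ℝ) 1,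
        deriv (fun a' : ℝ => regIncBeta x' a' c) a
          = ((∫ s in (0:ℝ)..x', s ^ (a-1) * Real.log s * (1-s) ^ (c-1)) * incBeta 1 a c
              - incBeta x' a c
                * ∫ s in (0:ℝ)..1, s ^ (a-1) * Real.log s * (1-s) ^ (c-1))
            / incBeta 1 a c ^ 2 := by
      intro x' hx'
      obtain ⟨_, hF_deriv⟩ := hasDerivAt_incBeta_param hc ha hx'.1 hx'.2.le
      have hq : HasDerivAt (fun a' : ℝ => regIncBeta x' a' c)
          (((∫ s in (0:ℝ)..x', s ^ (a-1) * Real.log s * (1-s) ^ (c-1)) * incBeta 1 a c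
              - incBeta x' a c
                * ∫ s in (0:ℝ)..1, s ^ (a-1) * Real.log s * (1-s) ^ (c-1))
            / incBeta 1 a c ^ 2) a := by
        unfold regIncBeta
        exact hF_deriv.div hB_deriv hBne
      exact hq.deriv
    have hcont1 : ContinuousAt (fun s : ℝ => s ^ (a-1) * Real.log s * (1-s) ^ (c-1)) x := by
      have c1 : ContinuousAt (fun s : ℝ => s ^ (a-1)) x :=
        Real.continuousAt_rpow_const x (a-1) (Or.inl hx0.ne')
      have c2 : ContinuousAt Real.log x := Real.continuousAt_log hx0.ne'
      have c3 : ContinuousAt (fun s : ℝ => (1-s) ^ (c-1)) x :=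
        ContinuousAt.rpow_const (continuousAt_const.sub continuousAt_id) (Or.inl h1x.ne')
      exact (c1.mul c2).mul c3
    have hcont2 : ContinuousAt (fun s : ℝ => s ^ (a-1) * (1-s) ^ (c-1)) x := by
      have c1 : ContinuousAt (fun s : ℝ => s ^ (a-1)) x :=
        Real.continuousAt_rpow_const x (a-1) (Or.inl hx0.ne')
      have c3 : ContinuousAt (fun s : ℝ => (1-s) ^ (c-1)) x :=
        ContinuousAt.rpow_const (continuousAt_const.sub continuousAt_id) (Or.inl h1x.ne')
      exact c1.mul c3
    have hmeasf : StronglyMeasurableAtFilter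
        (fun s : ℝ => s ^ (a-1) * Real.log s * (1-s) ^ (c-1)) (nhds x) :=
      ⟨univ, univ_mem, (measurable_betaKerLog (a-1) (c-1)).aestronglyMeasurable⟩
    have hmeasg : StronglyMeasurableAtFilter
        (fun s : ℝ => s ^ (a-1) * (1-s) ^ (c-1)) (nhds x) :=
      ⟨univ, univ_mem, (measurable_betaKer (a-1) (c-1)).aestronglyMeasurable⟩
    obtain ⟨hJx_int, _⟩ := hasDerivAt_incBeta_param hc ha hx0 hx1.le
    have hJ_deriv : HasDerivAt
        (fun x' : ℝ => ∫ s in (0:ℝ)..x', s ^ (a-1) * Real.log s * (1-s) ^ (c-1))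
        (x ^ (a-1) * Real.log x * (1-x) ^ (c-1)) x :=
      intervalIntegral.integral_hasDerivAt_right hJx_int hmeasf hcont1
    have hF_deriv : HasDerivAt (fun x' : ℝ => incBeta x' a c)
        (x ^ (a-1) * (1-x) ^ (c-1)) x :=
      intervalIntegral.integral_hasDerivAt_right
        (intervalIntegrable_beta_ker (by linarith) (by linarith) hx0 hx1.le) hmeasg hcont2
    have hmain := ((hJ_deriv.mul_const (incBeta 1 a c)).sub
        (hF_deriv.mul_const (∫ s in (0:ℝ)..1, s ^ (a-1) * Real.log s * (1-s) ^ (c-1)))).div_const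
        (incBeta 1 a c ^ 2)
    refine hmain.congr_of_eventuallyEq ?_
    filter_upwards [Ioo_mem_nhds hx0 hx1] with x' hx'
    exact hg x' hx'
end

section
/- Let K ≥ 2 and fix t ≥ 0. Then lim_{b → 0⁺} C(b, t) = 0. Consequently, the Dirichlet conditional vector field u_t(x | x_1 = e_i) = C(x_i, t)(e_i − x) vanishes as x approaches the face of the simplex opposite the target vertex e_i. -/
open Filter

/-- `Ĩ_x(a, c) = ∂ I_x(a, c) / ∂a`. -/
noncomputable def Itilde (x a c : ℝ) : ℝ := deriv (fun a' : ℝ => regIncBeta x a' c) a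

/-- The Dirichlet flow-matching coefficient
`C(b, t) = -Ĩ_b(t+1, K-1) · B(t+1, K-1) / ((1-b)^{K-1} · b^t)`. -/
noncomputable def Ccoef (K : ℕ) (b t : ℝ) : ℝ :=
  -Itilde b (t + 1) ((K : ℝ) - 1) * incBeta 1 (t + 1) ((K : ℝ) - 1) /
    ((1 - b) ^ (K - 1) * b ^ t)

section Aux

open Real MeasureTheory intervalIntegral Set

lemma neg_log_le_four {s : ℝ} (hs : 0 < s) : -Real.log s ≤ 4 * s ^ (-(1:ℝ)/4) := by
  have h := Real.log_le_sub_one_of_pos (Real.rpow_pos_of_pos hs (-(1:ℝ)/4))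
  rw [Real.log_rpow hs] at h
  have h2 := Real.rpow_pos_of_pos hs (-(1:ℝ)/4)
  linarith

lemma neg_log_le_two {s : ℝ} (hs : 0 < s) : -Real.log s ≤ 2 * s ^ (-(1:ℝ)/2) := by
  have h := Real.log_le_sub_one_of_pos (Real.rpow_pos_of_pos hs (-(1:ℝ)/2))
  rw [Real.log_rpow hs] at h
  have h2 := Real.rpow_pos_of_pos hs (-(1:ℝ)/2)
  linarith

lemma kernelContOn (p q x : ℝ) (hq : 0 ≤ q) :
    ContinuousOn (fun s : ℝ => s ^ p * (1 - s) ^ q) (Set.Ioc 0 x) :=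
  (continuousOn_id.rpow_const fun _ hs => Or.inl (ne_of_gt hs.1)).mul
    ((continuousOn_const.sub continuousOn_id).rpow_const fun _ _ => Or.inr hq)

lemma kernelAESM (p q x : ℝ) (hq : 0 ≤ q) (hx : 0 ≤ x) :
    AEStronglyMeasurable (fun s : ℝ => s ^ p * (1 - s) ^ q)
      (MeasureTheory.volume.restrict (Set.uIoc 0 x)) := by
  rw [Set.uIoc_of_le hx]
  exact (kernelContOn p q x hq).aestronglyMeasurable measurableSet_Ioc

lemma kernelIntInt {p q x : ℝ} (hp : -1 < p) (hq : 0 ≤ q) (hx0 : 0 ≤ x) (hx1 : x ≤ 1) :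
    IntervalIntegrable (fun s : ℝ => s ^ p * (1 - s) ^ q) MeasureTheory.volume 0 x := by
  apply (intervalIntegral.intervalIntegrable_rpow' hp (a := 0) (b := x)).mono_fun
    (kernelAESM p q x hq hx0)
  rw [Set.uIoc_of_le hx0]
  filter_upwards [MeasureTheory.ae_restrict_mem measurableSet_Ioc] with s hs
  have h0 : (0:ℝ) < s := hs.1
  have h1 : s ≤ 1 := hs.2.trans hx1
  have hs1 : (0:ℝ) ≤ 1 - s := by linarith
  rw [Real.norm_eq_abs, Real.norm_eq_abs,
    abs_of_nonneg (mul_nonneg (Real.rpow_nonneg h0.le _) (Real.rpow_nonneg hs1 _)),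
    abs_of_nonneg (Real.rpow_nonneg h0.le _)]
  have h2 : (1 - s) ^ q ≤ 1 := Real.rpow_le_one hs1 (by linarith) hq
  nlinarith [Real.rpow_nonneg h0.le p]

set_option maxHeartbeats 1000000 in
lemma hasDerivAt_incBeta {x c a : ℝ} (hx0 : 0 < x) (hx1 : x ≤ 1) (hc : 1 ≤ c) (ha : 1 ≤ a) :
    IntervalIntegrable (fun s : ℝ => Real.log s * (s ^ (a - 1) * (1 - s) ^ (c - 1)))
      MeasureTheory.volume 0 x ∧
    HasDerivAt (fun a' : ℝ => incBeta x a' c)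
      (∫ s in (0:ℝ)..x, Real.log s * (s ^ (a - 1) * (1 - s) ^ (c - 1))) a := by
  have hq : (0:ℝ) ≤ c - 1 := by linarith
  have hIoc : Set.uIoc (0:ℝ) x = Set.Ioc 0 x := Set.uIoc_of_le hx0.le
  have H := intervalIntegral.hasDerivAt_integral_of_dominated_loc_of_deriv_le
    (F := fun (a' : ℝ) (s : ℝ) => s ^ (a' - 1) * (1 - s) ^ (c - 1))
    (F' := fun (a' : ℝ) (s : ℝ) => Real.log s * (s ^ (a' - 1) * (1 - s) ^ (c - 1)))
    (bound := fun s => 8 * s ^ (-(1:ℝ)/2)) (s := Metric.ball a (1/8)) (x₀ := a)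
    (μ := MeasureTheory.volume) (a := 0) (b := x)
    (Metric.ball_mem_nhds a (by norm_num))
    (Filter.Eventually.of_forall fun a' => kernelAESM _ _ _ hq hx0.le)
    (kernelIntInt (by linarith) hq hx0.le hx1)
    (by
      rw [hIoc]
      exact ((Real.continuousOn_log.mono fun s hs => (ne_of_gt hs.1 : s ≠ 0)).mul
        (kernelContOn _ _ x hq)).aestronglyMeasurable measurableSet_Ioc)
    (by
      refine Filter.Eventually.of_forall fun s hs a' ha' => ?_
      rw [hIoc] at hs
      have hs0 : 0 < s := hs.1
      have hs1 : s ≤ 1 := hs.2.trans hx1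
      have ha'1 : -(1/8 : ℝ) ≤ a' - 1 := by
        have h := Metric.mem_ball.mp ha'
        rw [Real.dist_eq] at h
        have := abs_sub_lt_iff.mp h
        linarith [this.1, this.2]
      have hlog : |Real.log s| ≤ 4 * s ^ (-(1:ℝ)/4) := by
        rw [abs_of_nonpos (Real.log_nonpos hs0.le hs1)]
        exact neg_log_le_four hs0
      have hk1 : s ^ (a' - 1) ≤ s ^ (-(1/8 : ℝ)) :=
        Real.rpow_le_rpow_of_exponent_ge hs0 hs1 ha'1
      have hk2 : (1 - s) ^ (c - 1) ≤ 1 :=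
        Real.rpow_le_one (by linarith) (by linarith) hq
      rw [Real.norm_eq_abs, abs_mul,
        abs_of_nonneg (mul_nonneg (Real.rpow_nonneg hs0.le _)
          (Real.rpow_nonneg (by linarith : (0:ℝ) ≤ 1 - s) _))]
      calc |Real.log s| * (s ^ (a' - 1) * (1 - s) ^ (c - 1))
          ≤ (4 * s ^ (-(1:ℝ)/4)) * (s ^ (-(1/8:ℝ)) * 1) := by
            apply mul_le_mul hlog ?_ ?_ ?_
            · exact mul_le_mul hk1 hk2
                (Real.rpow_nonneg (by linarith : (0:ℝ) ≤ 1 - s) _)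
                (Real.rpow_nonneg hs0.le _)
            · exact mul_nonneg (Real.rpow_nonneg hs0.le _)
                (Real.rpow_nonneg (by linarith : (0:ℝ) ≤ 1 - s) _)
            · positivity
        _ = 4 * s ^ (-(1:ℝ)/4 + -(1/8:ℝ)) := by
            rw [mul_one, mul_assoc, ← Real.rpow_add hs0]
        _ ≤ 8 * s ^ (-(1:ℝ)/2) := by
            have h1 : s ^ (-(1:ℝ)/4 + -(1/8:ℝ)) ≤ s ^ (-(1:ℝ)/2) :=
              Real.rpow_le_rpow_of_exponent_ge hs0 hs1 (by norm_num)
            nlinarith [Real.rpow_nonneg hs0.le (-(1:ℝ)/2)])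
    ((intervalIntegral.intervalIntegrable_rpow' (by norm_num)).const_mul 8)
    (by
      refine Filter.Eventually.of_forall fun s hs a' _ => ?_
      rw [hIoc] at hs
      have hs0 : 0 < s := hs.1
      have h1 : HasDerivAt (fun y : ℝ => s ^ y) (s ^ (a' - 1) * Real.log s) (a' - 1) :=
        (Real.hasStrictDerivAt_const_rpow hs0 (a' - 1)).hasDerivAt
      have h2 : HasDerivAt (fun a' : ℝ => a' - 1) 1 a' := (hasDerivAt_id a').sub_const 1
      have h3 := (h1.comp a' h2).mul_const ((1 - s) ^ (c - 1))
      exact h3.congr_deriv (by ring))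
  exact ⟨H.1, H.2⟩

lemma incBeta_one_pos {a c : ℝ} (ha : 1 ≤ a) (hc : 1 ≤ c) : 0 < incBeta 1 a c := by
  unfold incBeta
  exact intervalIntegral.intervalIntegral_pos_of_pos_on
    (kernelIntInt (by linarith) (by linarith) zero_le_one le_rfl)
    (fun s hs => mul_pos (Real.rpow_pos_of_pos hs.1 _)
      (Real.rpow_pos_of_pos (by linarith [hs.2]) _))
    one_pos

end Aux

set_option maxHeartbeats 1000000 in
/-- The Dirichlet flow-matching coefficient vanishes on the face opposite
the target vertex: `lim_{b → 0⁺} C(b, t) = 0`. -/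
theorem Ccoef_tendsto_zero_at_opposite_face (K : ℕ) (hK : 2 ≤ K) (t : ℝ) (ht : 0 ≤ t) :
    Tendsto (fun b : ℝ => Ccoef K b t) (nhdsWithin 0 (Set.Ioi 0)) (nhds 0) := by
  set a : ℝ := t + 1 with ha_def
  set c : ℝ := (K : ℝ) - 1 with hc_def
  have ha : 1 ≤ a := by rw [ha_def]; linarith
  have hc : 1 ≤ c := by
    have h2 : (2:ℝ) ≤ (K:ℝ) := by exact_mod_cast hK
    rw [hc_def]; linarith
  have hG : 0 < incBeta 1 a c := incBeta_one_pos ha hc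
  obtain ⟨hJ1int, hG'⟩ := hasDerivAt_incBeta one_pos le_rfl hc ha
  set G : ℝ := incBeta 1 a c with hG_def
  set J1 : ℝ := ∫ s in (0:ℝ)..1, Real.log s * (s ^ (a - 1) * (1 - s) ^ (c - 1)) with hJ1_def
  -- the majorant tends to 0
  have h1 : Tendsto (fun b : ℝ => b ^ ((1:ℝ)/2)) (nhds 0) (nhds 0) := by
    have h := (Real.continuousAt_rpow_const 0 ((1:ℝ)/2) (Or.inr (by norm_num))).tendsto
    have h0 : (0:ℝ) ^ ((1:ℝ)/2) = 0 := Real.zero_rpow (by norm_num)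
    rwa [h0] at h
  have hM : Tendsto (fun b : ℝ => (2:ℝ)^(K-1) * (4 * b ^ ((1:ℝ)/2) + b * (|J1| / G)))
      (nhdsWithin 0 (Set.Ioi 0)) (nhds 0) := by
    have h2 := (((h1.const_mul (4:ℝ)).add
      ((continuous_id.tendsto (0:ℝ)).mul_const (|J1|/G))).const_mul ((2:ℝ)^(K-1))).mono_left
      (nhdsWithin_le_nhds (s := Set.Ioi (0:ℝ)))
    simpa using h2
  rw [tendsto_zero_iff_abs_tendsto_zero]
  apply squeeze_zero' (Filter.Eventually.of_forall fun b => abs_nonneg _) _ hM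
  filter_upwards [Ioc_mem_nhdsGT_of_mem (Set.left_mem_Ico.mpr (by norm_num : (0:ℝ) < 1/2))]
    with b hb
  obtain ⟨hb0, hb2⟩ := hb
  have hb1 : b ≤ 1 := by linarith
  obtain ⟨hJbint, hFb'⟩ := hasDerivAt_incBeta hb0 hb1 hc ha
  set Fb : ℝ := incBeta b a c with hFb_def
  set Jb : ℝ := ∫ s in (0:ℝ)..b, Real.log s * (s ^ (a - 1) * (1 - s) ^ (c - 1)) with hJb_def
  have hIt : Itilde b a c = (Jb * G - Fb * J1) / G ^ 2 := by
    have h := hFb'.div hG' (ne_of_gt hG)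
    simp only [Itilde, regIncBeta]
    exact h.deriv
  -- bounds
  have hFb0 : 0 ≤ Fb := by
    rw [hFb_def]
    unfold incBeta
    apply intervalIntegral.integral_nonneg hb0.le
    intro s hs
    exact mul_nonneg (Real.rpow_nonneg hs.1 _)
      (Real.rpow_nonneg (by linarith [hs.2] : (0:ℝ) ≤ 1 - s) _)
  have hFb_le : Fb ≤ b ^ t * b := by
    have h1 : Fb ≤ ∫ s in (0:ℝ)..b, s ^ (a - 1) := by
      rw [hFb_def]; unfold incBeta
      apply intervalIntegral.integral_mono_on hb0.le
        (kernelIntInt (by linarith) (by linarith) hb0.le hb1)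
        (intervalIntegral.intervalIntegrable_rpow' (by linarith))
      intro s hs
      have h2 : (1 - s) ^ (c - 1) ≤ 1 :=
        Real.rpow_le_one (by linarith [hs.2]) (by linarith [hs.1]) (by linarith)
      nlinarith [Real.rpow_nonneg hs.1 (a - 1)]
    rw [integral_rpow (Or.inl (by linarith))] at h1
    have he : a - 1 + 1 = a := by ring
    rw [he, Real.zero_rpow (by intro h; rw [h] at ha; linarith : a ≠ 0)] at h1
    have h3 : b ^ a / a ≤ b ^ a := div_le_self (Real.rpow_nonneg hb0.le a) ha
    have h4 : b ^ a = b ^ t * b := by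
      rw [ha_def, Real.rpow_add hb0, Real.rpow_one]
    rw [← h4]
    calc Fb ≤ (b ^ a - 0) / a := h1
      _ = b ^ a / a := by ring_nf
      _ ≤ b ^ a := h3
  have hJb_abs : |Jb| ≤ 4 * (b ^ t * b ^ ((1:ℝ)/2)) := by
    have h1 : |Jb| ≤ ∫ s in (0:ℝ)..b, |Real.log s * (s ^ (a - 1) * (1 - s) ^ (c - 1))| := by
      rw [hJb_def]
      exact intervalIntegral.abs_integral_le_integral_abs hb0.le
    have h2 : (∫ s in (0:ℝ)..b, |Real.log s * (s ^ (a - 1) * (1 - s) ^ (c - 1))|)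
        ≤ ∫ s in (0:ℝ)..b, 2 * s ^ (a - 3/2) := by
      apply intervalIntegral.integral_mono_on hb0.le hJbint.abs
        ((intervalIntegral.intervalIntegrable_rpow' (by linarith)).const_mul 2)
      intro s hs
      rcases eq_or_lt_of_le hs.1 with h0 | h0
      · rw [← h0]
        simp [Real.log_zero]
        positivity
      · have hs1 : s ≤ 1 := le_trans hs.2 hb1
        have hlog := neg_log_le_two h0
        have hk2 : (1 - s) ^ (c - 1) ≤ 1 :=
          Real.rpow_le_one (by linarith) (by linarith) (by linarith)
        rw [abs_mul, abs_of_nonpos (Real.log_nonpos h0.le hs1),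
          abs_of_nonneg (mul_nonneg (Real.rpow_nonneg h0.le _)
            (Real.rpow_nonneg (by linarith : (0:ℝ) ≤ 1 - s) _))]
        calc (-Real.log s) * (s ^ (a - 1) * (1 - s) ^ (c - 1))
            ≤ (2 * s ^ (-(1:ℝ)/2)) * (s ^ (a - 1) * 1) := by
              apply mul_le_mul hlog ?_ ?_ ?_
              · exact mul_le_mul_of_nonneg_left hk2 (Real.rpow_nonneg h0.le _)
              · exact mul_nonneg (Real.rpow_nonneg h0.le _)
                  (Real.rpow_nonneg (by linarith : (0:ℝ) ≤ 1 - s) _)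
              · positivity
          _ = 2 * s ^ (-(1:ℝ)/2 + (a - 1)) := by
              rw [mul_one, mul_assoc, ← Real.rpow_add h0]
          _ = 2 * s ^ (a - 3/2) := by
              rw [show -(1:ℝ)/2 + (a - 1) = a - 3/2 by ring]
    have h3 : (∫ s in (0:ℝ)..b, 2 * s ^ (a - 3/2)) = 2 * (b ^ (a - 1/2) / (a - 1/2)) := by
      rw [intervalIntegral.integral_const_mul, integral_rpow (Or.inl (by linarith))]
      rw [show a - 3/2 + 1 = a - 1/2 by ring,
        Real.zero_rpow (ne_of_gt (by linarith : (0:ℝ) < a - 1/2))]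
      ring
    have h4 : 2 * (b ^ (a - 1/2) / (a - 1/2)) ≤ 4 * b ^ (a - 1/2) := by
      have hx := Real.rpow_nonneg hb0.le (a - 1/2)
      rw [← mul_div_assoc, div_le_iff₀ (by linarith : (0:ℝ) < a - 1/2)]
      nlinarith
    have h5 : b ^ (a - 1/2) = b ^ t * b ^ ((1:ℝ)/2) := by
      rw [← Real.rpow_add hb0]
      congr 1
      rw [ha_def]; ring
    rw [← h5]
    linarith [h1.trans (h2.trans_eq h3)]
  have hbt : 0 < b ^ t := Real.rpow_pos_of_pos hb0 t
  have hdpos : (0:ℝ) < (1 - b) ^ (K - 1) := pow_pos (by linarith) _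
  have hd : ((1:ℝ)/2) ^ (K - 1) ≤ (1 - b) ^ (K - 1) :=
    pow_le_pow_left₀ (by norm_num) (by linarith) _
  have hone : (1:ℝ) ≤ (2:ℝ) ^ (K - 1) * (1 - b) ^ (K - 1) := by
    have h2 : (2:ℝ) ^ (K - 1) * ((1:ℝ)/2) ^ (K - 1) = 1 := by
      rw [← mul_pow]; norm_num
    nlinarith [pow_pos (show (0:ℝ) < 2 by norm_num) (K - 1)]
  have key : Ccoef K b t = (Fb * J1 - Jb * G) / (G * ((1 - b) ^ (K - 1) * b ^ t)) := by
    unfold Ccoef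
    rw [← ha_def, ← hc_def, hIt, ← hG_def]
    field_simp
    ring
  have hnum : |Fb * J1 - Jb * G| ≤ b ^ t * (b * |J1| + 4 * b ^ ((1:ℝ)/2) * G) := by
    have htri : |Fb * J1 - Jb * G| ≤ |Fb * J1| + |Jb * G| := abs_sub _ _
    rw [abs_mul, abs_mul, abs_of_nonneg hFb0, abs_of_nonneg hG.le] at htri
    have e1 : Fb * |J1| ≤ (b ^ t * b) * |J1| :=
      mul_le_mul_of_nonneg_right hFb_le (abs_nonneg _)
    have e2 : |Jb| * G ≤ (4 * (b ^ t * b ^ ((1:ℝ)/2))) * G :=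
      mul_le_mul_of_nonneg_right hJb_abs hG.le
    nlinarith
  rw [key, abs_div, abs_of_pos (by positivity : (0:ℝ) < G * ((1 - b) ^ (K - 1) * b ^ t)),
    div_le_iff₀ (by positivity : (0:ℝ) < G * ((1 - b) ^ (K - 1) * b ^ t))]
  have hRHS : (2:ℝ) ^ (K - 1) * (4 * b ^ ((1:ℝ)/2) + b * (|J1| / G)) *
      (G * ((1 - b) ^ (K - 1) * b ^ t))
      = ((2:ℝ) ^ (K - 1) * (1 - b) ^ (K - 1)) * (b ^ t * (b * |J1| + 4 * b ^ ((1:ℝ)/2) * G)) := by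
    field_simp
    ring
  have hnn : 0 ≤ b ^ t * (b * |J1| + 4 * b ^ ((1:ℝ)/2) * G) := by
    apply mul_nonneg hbt.le
    have hh1 : 0 ≤ b * |J1| := mul_nonneg hb0.le (abs_nonneg _)
    have hh2 : 0 ≤ 4 * b ^ ((1:ℝ)/2) * G :=
      mul_nonneg (mul_nonneg (by norm_num) (Real.rpow_nonneg hb0.le _)) hG.le
    linarith
  calc |Fb * J1 - Jb * G| ≤ b ^ t * (b * |J1| + 4 * b ^ ((1:ℝ)/2) * G) := hnum
    _ = 1 * (b ^ t * (b * |J1| + 4 * b ^ ((1:ℝ)/2) * G)) := (one_mul _).symm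
    _ ≤ ((2:ℝ) ^ (K - 1) * (1 - b) ^ (K - 1)) *
        (b ^ t * (b * |J1| + 4 * b ^ ((1:ℝ)/2) * G)) :=
      mul_le_mul_of_nonneg_right hone hnn
    _ = _ := hRHS.symm
end

section
/- Let K ≥ 2 and fix t ≥ 0. Then lim_{b → 1⁻} C(b, t) · (1 − b) = 0. Consequently, the magnitude of the Dirichlet conditional vector field u_t(x | x_1 = e_i) = C(x_i, t)(e_i − x) vanishes as x approaches the target vertex e_i. -/
open Filter

namespace DFMAux

open Real MeasureTheory intervalIntegral Set Topology

lemma neg_log_le {s : ℝ} (hs : 0 < s) : -Real.log s ≤ 4 * s ^ (-(1/4) : ℝ) := by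
  have h1 : Real.log (s ^ (-(1/4):ℝ)) ≤ s ^ (-(1/4):ℝ) - 1 :=
    Real.log_le_sub_one_of_pos (Real.rpow_pos_of_pos hs _)
  rw [Real.log_rpow hs] at h1
  linarith

lemma aux34 {x : ℝ} (hx : 1/2 ≤ x) : x ^ (-3/4 : ℝ) ≤ 2 := by
  have hx0 : (0:ℝ) < x := by linarith
  have h1 : (1/2:ℝ) ≤ x ^ (3/4:ℝ) := by
    calc (1/2:ℝ) = (1/2:ℝ) ^ (1:ℝ) := (Real.rpow_one _).symm
    _ ≤ (1/2:ℝ) ^ (3/4:ℝ) :=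
        Real.rpow_le_rpow_of_exponent_ge (by norm_num) (by norm_num) (by norm_num)
    _ ≤ x ^ (3/4:ℝ) := Real.rpow_le_rpow (by norm_num) hx (by norm_num)
  rw [show (-3/4:ℝ) = -(3/4:ℝ) by norm_num, Real.rpow_neg hx0.le]
  calc (x ^ (3/4:ℝ))⁻¹ ≤ (1/2:ℝ)⁻¹ := inv_anti₀ (by norm_num) h1
  _ = 2 := by norm_num

lemma rpow_lip {s u v : ℝ} (hs0 : 0 < s) (hs1 : s ≤ 1)
    (hu : (-1/2:ℝ) ≤ u) (hv : (-1/2:ℝ) ≤ v) :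
    |s ^ u - s ^ v| ≤ 4 * s ^ (-3/4:ℝ) * |u - v| := by
  have hC : ∀ θ ∈ uIcc v u, ‖s ^ θ * Real.log s‖ ≤ 4 * s ^ (-3/4:ℝ) := by
    intro θ hθ
    have hθ' : (-1/2:ℝ) ≤ θ := le_trans (le_min hv hu) hθ.1
    have h1 : s ^ θ ≤ s ^ (-1/2:ℝ) := Real.rpow_le_rpow_of_exponent_ge hs0 hs1 hθ'
    have h2 : -Real.log s ≤ 4 * s ^ (-(1/4):ℝ) := neg_log_le hs0
    have hlog : |Real.log s| = -Real.log s := abs_of_nonpos (Real.log_nonpos hs0.le hs1)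
    rw [norm_mul, Real.norm_eq_abs, Real.norm_eq_abs,
      abs_of_nonneg (Real.rpow_nonneg hs0.le _), hlog]
    calc s ^ θ * -Real.log s ≤ s ^ (-1/2:ℝ) * (4 * s ^ (-(1/4):ℝ)) :=
          mul_le_mul h1 h2 (by linarith [Real.log_nonpos hs0.le hs1])
            (Real.rpow_nonneg hs0.le _)
    _ = 4 * s ^ (-3/4:ℝ) := by
          rw [show (-3/4:ℝ) = (-1/2:ℝ) + (-(1/4):ℝ) by norm_num, Real.rpow_add hs0]
          ring
  have hd : ∀ θ ∈ uIcc v u,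
      HasDerivWithinAt (fun x : ℝ => s ^ x) (s ^ θ * Real.log s) (uIcc v u) θ :=
    fun θ _ => ((Real.hasStrictDerivAt_const_rpow hs0 θ).hasDerivAt).hasDerivWithinAt
  have h := (convex_uIcc v u).norm_image_sub_le_of_norm_hasDerivWithin_le hd hC
    (right_mem_uIcc) (left_mem_uIcc)
  rw [Real.norm_eq_abs, Real.norm_eq_abs] at h
  calc |s ^ u - s ^ v| = |s ^ v - s ^ u| := abs_sub_comm _ _
  _ ≤ 4 * s ^ (-3/4:ℝ) * |v - u| := h
  _ = 4 * s ^ (-3/4:ℝ) * |u - v| := by rw [abs_sub_comm]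

lemma integrand_nonneg {s a c : ℝ} (hs0 : 0 ≤ s) (hs1 : s ≤ 1) :
    0 ≤ s ^ (a-1) * (1-s) ^ (c-1) :=
  mul_nonneg (Real.rpow_nonneg hs0 _) (Real.rpow_nonneg (by linarith) _)

lemma integrand_le {s a c : ℝ} (hs0 : 0 < s) (hs1 : s ≤ 1) (ha : (-1/2:ℝ) ≤ a - 1)
    (hc : 1 ≤ c) : s ^ (a-1) * (1-s) ^ (c-1) ≤ s ^ (-3/4:ℝ) := by
  have h1 : s ^ (a-1) ≤ s ^ (-3/4:ℝ) :=
    Real.rpow_le_rpow_of_exponent_ge hs0 hs1 (by linarith)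
  have h2 : (1-s) ^ (c-1) ≤ 1 := Real.rpow_le_one (by linarith) (by linarith) (by linarith)
  calc s ^ (a-1) * (1-s) ^ (c-1) ≤ s ^ (-3/4:ℝ) * 1 :=
        mul_le_mul h1 h2 (Real.rpow_nonneg (by linarith) _) (Real.rpow_nonneg hs0.le _)
  _ = _ := mul_one _

lemma intInt {a c : ℝ} (ha : (-1/2:ℝ) ≤ a - 1) (hc : 1 ≤ c) :
    IntervalIntegrable (fun s => s ^ (a-1) * (1-s) ^ (c-1)) volume 0 1 := by
  refine (intervalIntegrable_rpow' (r := (-3/4:ℝ)) (by norm_num)).mono_fun ?_ ?_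
  · apply Measurable.aestronglyMeasurable; fun_prop
  · filter_upwards [ae_restrict_mem measurableSet_uIoc] with s hs
    rw [uIoc_of_le (by norm_num : (0:ℝ) ≤ 1)] at hs
    rw [Real.norm_eq_abs, Real.norm_eq_abs, abs_of_nonneg (integrand_nonneg hs.1.le hs.2),
      abs_of_nonneg (Real.rpow_nonneg hs.1.le _)]
    exact integrand_le hs.1 hs.2 ha hc

lemma intInt' {a c x y : ℝ} (ha : (-1/2:ℝ) ≤ a - 1) (hc : 1 ≤ c)
    (hx0 : 0 ≤ x) (hx1 : x ≤ 1) (hy0 : 0 ≤ y) (hy1 : y ≤ 1) :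
    IntervalIntegrable (fun s => s ^ (a-1) * (1-s) ^ (c-1)) volume x y :=
  (intInt ha hc).mono_set (by
    rw [uIcc_of_le (by norm_num : (0:ℝ) ≤ 1)]
    exact uIcc_subset_Icc ⟨hx0, hx1⟩ ⟨hy0, hy1⟩)

lemma integral_rpow34 : (∫ s in (0:ℝ)..1, s ^ (-3/4:ℝ)) = 4 := by
  rw [integral_rpow (Or.inl (by norm_num))]
  rw [Real.one_rpow, Real.zero_rpow (by norm_num)]
  norm_num

lemma incBeta_one_le {a c : ℝ} (ha : (-1/2:ℝ) ≤ a - 1) (hc : 1 ≤ c) : incBeta 1 a c ≤ 4 := by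
  have h := intervalIntegral.norm_integral_le_abs_of_norm_le (μ := volume) (a := (0:ℝ)) (b := 1)
      (f := fun s => s ^ (a-1) * (1-s) ^ (c-1)) (g := fun s : ℝ => s ^ (-3/4:ℝ))
      ?_ (intervalIntegrable_rpow' (by norm_num))
  · rw [integral_rpow34] at h
    calc incBeta 1 a c ≤ |incBeta 1 a c| := le_abs_self _
    _ ≤ |(4:ℝ)| := h
    _ = 4 := by norm_num
  · filter_upwards [ae_restrict_mem measurableSet_uIoc] with s hs
    rw [uIoc_of_le (by norm_num : (0:ℝ) ≤ 1)] at hs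
    rw [Real.norm_eq_abs, abs_of_nonneg (integrand_nonneg hs.1.le hs.2)]
    exact integrand_le hs.1 hs.2 ha hc

lemma incBeta_one_ge {a c t : ℝ} (hc : 1 ≤ c) (ht : 0 ≤ t)
    (ha1 : (-1/2:ℝ) ≤ a - 1) (ha2 : a - 1 ≤ t + 1/2) :
    (1/2:ℝ) ^ (t+1/2) * (1/4:ℝ) ^ (c-1) / 4 ≤ incBeta 1 a c := by
  set f : ℝ → ℝ := fun s => s ^ (a-1) * (1-s) ^ (c-1) with hf
  have hsub : ∀ x y : ℝ, 0 ≤ x → x ≤ 1 → 0 ≤ y → y ≤ 1 → IntervalIntegrable f volume x y :=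
    fun x y hx0 hx1 hy0 hy1 => intInt' ha1 hc hx0 hx1 hy0 hy1
  have e1 : (∫ s in (0:ℝ)..(1/2:ℝ), f s) + (∫ s in (1/2:ℝ)..(3/4:ℝ), f s)
      = ∫ s in (0:ℝ)..(3/4:ℝ), f s :=
    integral_add_adjacent_intervals
      (hsub 0 (1/2) (by norm_num) (by norm_num) (by norm_num) (by norm_num))
      (hsub (1/2) (3/4) (by norm_num) (by norm_num) (by norm_num) (by norm_num))
  have e2 : (∫ s in (0:ℝ)..(3/4:ℝ), f s) + (∫ s in (3/4:ℝ)..1, f s)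
      = ∫ s in (0:ℝ)..1, f s :=
    integral_add_adjacent_intervals
      (hsub 0 (3/4) (by norm_num) (by norm_num) (by norm_num) (by norm_num))
      (hsub (3/4) 1 (by norm_num) (by norm_num) (by norm_num) (by norm_num))
  have n1 : 0 ≤ ∫ s in (0:ℝ)..(1/2:ℝ), f s :=
    integral_nonneg (by norm_num) (fun u hu => integrand_nonneg hu.1 (by linarith [hu.2]))
  have n3 : 0 ≤ ∫ s in (3/4:ℝ)..1, f s :=
    integral_nonneg (by norm_num) (fun u hu => integrand_nonneg (by linarith [hu.1]) hu.2)
  have mid : (1/2:ℝ) ^ (t+1/2) * (1/4:ℝ) ^ (c-1) * (1/4) ≤ ∫ s in (1/2:ℝ)..(3/4:ℝ), f s := by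
    have hconst : (∫ _ in (1/2:ℝ)..(3/4:ℝ), ((1/2:ℝ) ^ (t+1/2) * (1/4:ℝ) ^ (c-1)))
        = (1/2:ℝ) ^ (t+1/2) * (1/4:ℝ) ^ (c-1) * (1/4) := by
      rw [intervalIntegral.integral_const, smul_eq_mul]; ring
    rw [← hconst]
    apply intervalIntegral.integral_mono_on (by norm_num) intervalIntegrable_const
      (hsub (1/2) (3/4) (by norm_num) (by norm_num) (by norm_num) (by norm_num))
    intro s hs
    obtain ⟨hs1, hs2⟩ := hs
    have hs0 : (0:ℝ) < s := by linarith
    have hA : (1/2:ℝ) ^ (t+1/2) ≤ s ^ (a-1) := by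
      rcases le_or_gt (a-1) 0 with h | h
      · calc (1/2:ℝ) ^ (t+1/2) ≤ 1 :=
              Real.rpow_le_one (by norm_num) (by norm_num) (by linarith)
        _ = s ^ (0:ℝ) := (Real.rpow_zero s).symm
        _ ≤ s ^ (a-1) := Real.rpow_le_rpow_of_exponent_ge hs0 (by linarith) h
      · calc (1/2:ℝ) ^ (t+1/2) ≤ s ^ (t+1/2) :=
              Real.rpow_le_rpow (by norm_num) hs1 (by linarith)
        _ ≤ s ^ (a-1) := Real.rpow_le_rpow_of_exponent_ge hs0 (by linarith) ha2
    have hB : (1/4:ℝ) ^ (c-1) ≤ (1-s) ^ (c-1) :=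
      Real.rpow_le_rpow (by norm_num) (by linarith) (by linarith)
    exact mul_le_mul hA hB (Real.rpow_nonneg (by norm_num) _) (Real.rpow_nonneg hs0.le _)
  have hBeq : incBeta 1 a c = ∫ s in (0:ℝ)..1, f s := rfl
  linarith

lemma incBeta_one_diff {a a' c : ℝ} (hc : 1 ≤ c) (ha : (-1/2:ℝ) ≤ a - 1)
    (ha' : (-1/2:ℝ) ≤ a' - 1) :
    |incBeta 1 a' c - incBeta 1 a c| ≤ 16 * |a' - a| := by
  have hdiff : incBeta 1 a' c - incBeta 1 a c
      = ∫ s in (0:ℝ)..1, (s ^ (a'-1) - s ^ (a-1)) * (1-s) ^ (c-1) := by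
    rw [incBeta, incBeta, ← intervalIntegral.integral_sub (intInt ha' hc) (intInt ha hc)]
    congr 1; ext s; ring
  rw [hdiff]
  have h := intervalIntegral.norm_integral_le_abs_of_norm_le (μ := volume) (a := (0:ℝ)) (b := 1)
      (f := fun s => (s ^ (a'-1) - s ^ (a-1)) * (1-s) ^ (c-1))
      (g := fun s : ℝ => (4 * |a' - a|) * s ^ (-3/4:ℝ))
      ?_ ((intervalIntegrable_rpow' (by norm_num)).const_mul _)
  · rw [intervalIntegral.integral_const_mul, integral_rpow34] at h
    calc |∫ s in (0:ℝ)..1, (s ^ (a'-1) - s ^ (a-1)) * (1-s) ^ (c-1)|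
        ≤ |4 * |a' - a| * 4| := h
    _ = 16 * |a' - a| := by
        rw [abs_of_nonneg (show (0:ℝ) ≤ 4 * |a' - a| * 4 by positivity)]; ring
  · filter_upwards [ae_restrict_mem measurableSet_uIoc] with s hs
    rw [uIoc_of_le (by norm_num : (0:ℝ) ≤ 1)] at hs
    obtain ⟨hs0, hs1⟩ := hs
    rw [Real.norm_eq_abs, abs_mul, abs_of_nonneg (Real.rpow_nonneg (by linarith) (c-1))]
    have h1 : |s ^ (a'-1) - s ^ (a-1)| ≤ 4 * s ^ (-3/4:ℝ) * |a' - a| := by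
      calc |s ^ (a'-1) - s ^ (a-1)| ≤ 4 * s ^ (-3/4:ℝ) * |(a'-1) - (a-1)| :=
        rpow_lip hs0 hs1 ha' ha
      _ = 4 * s ^ (-3/4:ℝ) * |a' - a| := by ring_nf
    have h2 : (1-s) ^ (c-1) ≤ 1 :=
      Real.rpow_le_one (by linarith) (by linarith) (by linarith)
    calc |s ^ (a'-1) - s ^ (a-1)| * (1-s) ^ (c-1)
        ≤ (4 * s ^ (-3/4:ℝ) * |a' - a|) * 1 :=
          mul_le_mul h1 h2 (Real.rpow_nonneg (by linarith) _)
            (mul_nonneg (mul_nonneg (by norm_num) (Real.rpow_nonneg hs0.le _)) (abs_nonneg _))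
    _ = 4 * |a' - a| * s ^ (-3/4:ℝ) := by ring

lemma tail_eq {a c b : ℝ} (hc : 1 ≤ c) (ha : (-1/2:ℝ) ≤ a - 1) (hb0 : 0 ≤ b) (hb1 : b ≤ 1) :
    incBeta 1 a c - incBeta b a c = ∫ s in b..1, s ^ (a-1) * (1-s) ^ (c-1) := by
  have h := integral_add_adjacent_intervals (a := (0:ℝ)) (b := b) (c := (1:ℝ))
    (f := fun s => s ^ (a-1) * (1-s) ^ (c-1)) (μ := volume)
    (intInt' ha hc le_rfl (by norm_num) hb0 hb1)
    (intInt' ha hc hb0 hb1 (by norm_num) le_rfl)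
  rw [incBeta, incBeta]
  linarith [h]

lemma tail_nonneg {a c b : ℝ} (hb0 : 0 ≤ b) (hb1 : b ≤ 1) :
    0 ≤ ∫ s in b..1, s ^ (a-1) * (1-s) ^ (c-1) :=
  intervalIntegral.integral_nonneg hb1
    (fun u hu => integrand_nonneg (le_trans hb0 hu.1) hu.2)

lemma tail_le {a c b : ℝ} (hc : 1 ≤ c) (ha : (-1/2:ℝ) ≤ a - 1)
    (hb : (1/2:ℝ) ≤ b) (hb1 : b ≤ 1) :
    |∫ s in b..1, s ^ (a-1) * (1-s) ^ (c-1)| ≤ 2 * (1-b) ^ (c-1) * (1-b) := by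
  have h := intervalIntegral.norm_integral_le_of_norm_le_const
      (f := fun s => s ^ (a-1) * (1-s) ^ (c-1)) (a := b) (b := 1)
      (C := 2 * (1-b) ^ (c-1)) ?_
  · calc |∫ s in b..1, s ^ (a-1) * (1-s) ^ (c-1)| ≤ 2 * (1-b) ^ (c-1) * |1 - b| := h
    _ = 2 * (1-b) ^ (c-1) * (1-b) := by
        rw [abs_of_nonneg (show (0:ℝ) ≤ 1 - b by linarith)]
  · intro s hs
    rw [uIoc_of_le hb1] at hs
    obtain ⟨hsb, hs1⟩ := hs
    have hs0 : (0:ℝ) < s := by linarith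
    have h1 : s ^ (a-1) ≤ 2 := le_trans
      (Real.rpow_le_rpow_of_exponent_ge hs0 hs1 (by linarith)) (aux34 (by linarith))
    have h2 : (1-s) ^ (c-1) ≤ (1-b) ^ (c-1) :=
      Real.rpow_le_rpow (by linarith) (by linarith) (by linarith)
    rw [Real.norm_eq_abs, abs_of_nonneg (integrand_nonneg hs0.le hs1)]
    exact mul_le_mul h1 h2 (Real.rpow_nonneg (by linarith) _) (by norm_num)

lemma tail_diff {a a' c b : ℝ} (hc : 1 ≤ c) (ha : (-1/2:ℝ) ≤ a - 1)
    (ha' : (-1/2:ℝ) ≤ a' - 1) (hb : (1/2:ℝ) ≤ b) (hb1 : b ≤ 1) :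
    |(∫ s in b..1, s ^ (a'-1) * (1-s) ^ (c-1)) - ∫ s in b..1, s ^ (a-1) * (1-s) ^ (c-1)|
      ≤ 8 * |a' - a| * (1-b) ^ (c-1) * (1-b) := by
  have hdiff : (∫ s in b..1, s ^ (a'-1) * (1-s) ^ (c-1))
        - ∫ s in b..1, s ^ (a-1) * (1-s) ^ (c-1)
      = ∫ s in b..1, (s ^ (a'-1) - s ^ (a-1)) * (1-s) ^ (c-1) := by
    rw [← intervalIntegral.integral_sub
      (intInt' ha' hc (by linarith) hb1 (by norm_num) le_rfl)
      (intInt' ha hc (by linarith) hb1 (by norm_num) le_rfl)]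
    congr 1; ext s; ring
  rw [hdiff]
  have h := intervalIntegral.norm_integral_le_of_norm_le_const
      (f := fun s => (s ^ (a'-1) - s ^ (a-1)) * (1-s) ^ (c-1)) (a := b) (b := 1)
      (C := 8 * |a' - a| * (1-b) ^ (c-1)) ?_
  · calc |∫ s in b..1, (s ^ (a'-1) - s ^ (a-1)) * (1-s) ^ (c-1)|
        ≤ 8 * |a' - a| * (1-b) ^ (c-1) * |1 - b| := h
    _ = 8 * |a' - a| * (1-b) ^ (c-1) * (1-b) := by
        rw [abs_of_nonneg (show (0:ℝ) ≤ 1 - b by linarith)]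
  · intro s hs
    rw [uIoc_of_le hb1] at hs
    obtain ⟨hsb, hs1⟩ := hs
    have hs0 : (0:ℝ) < s := by linarith
    have h1 : |s ^ (a'-1) - s ^ (a-1)| ≤ 4 * s ^ (-3/4:ℝ) * |a' - a| := by
      calc |s ^ (a'-1) - s ^ (a-1)| ≤ 4 * s ^ (-3/4:ℝ) * |(a'-1) - (a-1)| :=
        rpow_lip hs0 hs1 ha' ha
      _ = 4 * s ^ (-3/4:ℝ) * |a' - a| := by ring_nf
    have h34 : s ^ (-3/4:ℝ) ≤ 2 := aux34 (by linarith)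
    have h2 : (1-s) ^ (c-1) ≤ (1-b) ^ (c-1) :=
      Real.rpow_le_rpow (by linarith) (by linarith) (by linarith)
    rw [Real.norm_eq_abs, abs_mul, abs_of_nonneg (Real.rpow_nonneg (by linarith) (c-1))]
    calc |s ^ (a'-1) - s ^ (a-1)| * (1-s) ^ (c-1)
        ≤ (4 * s ^ (-3/4:ℝ) * |a' - a|) * (1-b) ^ (c-1) :=
          mul_le_mul h1 h2 (Real.rpow_nonneg (by linarith) _)
            (mul_nonneg (mul_nonneg (by norm_num) (Real.rpow_nonneg hs0.le _)) (abs_nonneg _))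
    _ ≤ (4 * 2 * |a' - a|) * (1-b) ^ (c-1) := by
          have hbb : (0:ℝ) ≤ (1-b) ^ (c-1) := Real.rpow_nonneg (by linarith) _
          apply mul_le_mul_of_nonneg_right _ hbb
          have h5 := mul_le_mul_of_nonneg_right h34 (abs_nonneg (a' - a))
          nlinarith [h5]
    _ = 8 * |a' - a| * (1-b) ^ (c-1) := by ring

lemma abs_deriv_le_of_lip {h : ℝ → ℝ} {a L : ℝ} (hL : 0 ≤ L)
    (hl : ∀ y, |y - a| ≤ 1/2 → |h y - h a| ≤ L * |y - a|) : |deriv h a| ≤ L := by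
  by_cases hd : DifferentiableAt ℝ h a
  · have hs := hasDerivAt_iff_tendsto_slope.mp hd.hasDerivAt
    have hs' : Tendsto (fun y => |slope h a y|) (𝓝[≠] a) (𝓝 |deriv h a|) := hs.abs
    refine le_of_tendsto hs' ?_
    have hmem : Metric.closedBall a (1/2) ∈ 𝓝[≠] a :=
      nhdsWithin_le_nhds (Metric.closedBall_mem_nhds a (by norm_num))
    filter_upwards [hmem, self_mem_nhdsWithin] with y hy hy'
    have hya : y ≠ a := hy'
    have hya' : y - a ≠ 0 := sub_ne_zero.mpr hya
    rw [slope_def_field, abs_div, div_le_iff₀ (abs_pos.mpr hya')]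
    exact hl y (by rw [← Real.dist_eq]; exact Metric.mem_closedBall.mp hy)
  · rw [deriv_zero_of_not_differentiableAt hd]; simpa using hL

lemma key_lip {b c t a' : ℝ} (hc : 1 ≤ c) (ht : 0 ≤ t) (hb2 : (1/2:ℝ) < b) (hb1 : b < 1)
    (ha' : |a' - (t+1)| ≤ 1/2) :
    |regIncBeta b a' c - regIncBeta b (t+1) c| ≤
      64 / ((1/2:ℝ) ^ (t+1/2) * (1/4:ℝ) ^ (c-1) / 4) ^ 2 * ((1-b) ^ (c-1) * (1-b))
        * |a' - (t+1)| := by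
  have hγ : 0 < (1/2:ℝ) ^ (t+1/2) * (1/4:ℝ) ^ (c-1) / 4 := by
    have h1 : (0:ℝ) < (1/2:ℝ) ^ (t+1/2) := Real.rpow_pos_of_pos (by norm_num) _
    have h2 : (0:ℝ) < (1/4:ℝ) ^ (c-1) := Real.rpow_pos_of_pos (by norm_num) _
    positivity
  set γ : ℝ := (1/2:ℝ) ^ (t+1/2) * (1/4:ℝ) ^ (c-1) / 4 with hγdef
  set a : ℝ := t + 1 with hadef
  have haexp : (-1/2:ℝ) ≤ a - 1 := by rw [hadef]; linarith
  have haexp2 : a - 1 ≤ t + 1/2 := by rw [hadef]; linarith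
  obtain ⟨hd1, hd2⟩ := abs_le.mp ha'
  have ha'1 : (-1/2:ℝ) ≤ a' - 1 := by linarith
  have ha'2 : a' - 1 ≤ t + 1/2 := by linarith
  have hTa : incBeta 1 a c - incBeta b a c = ∫ s in b..1, s ^ (a-1) * (1-s) ^ (c-1) :=
    tail_eq hc haexp (by linarith) hb1.le
  have hTa' : incBeta 1 a' c - incBeta b a' c = ∫ s in b..1, s ^ (a'-1) * (1-s) ^ (c-1) :=
    tail_eq hc ha'1 (by linarith) hb1.le
  set Ta : ℝ := ∫ s in b..1, s ^ (a-1) * (1-s) ^ (c-1) with hTadef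
  set Ta' : ℝ := ∫ s in b..1, s ^ (a'-1) * (1-s) ^ (c-1) with hTa'def
  have hga : γ ≤ incBeta 1 a c := incBeta_one_ge hc ht haexp haexp2
  have hga' : γ ≤ incBeta 1 a' c := incBeta_one_ge hc ht ha'1 ha'2
  have hg4 : incBeta 1 a c ≤ 4 := incBeta_one_le haexp hc
  have hgd : |incBeta 1 a' c - incBeta 1 a c| ≤ 16 * |a' - a| := incBeta_one_diff hc haexp ha'1
  have hT0 : 0 ≤ Ta := tail_nonneg (by linarith) hb1.le
  have hTle : |Ta| ≤ 2 * (1-b) ^ (c-1) * (1-b) := tail_le hc haexp hb2.le hb1.le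
  have hTd : |Ta' - Ta| ≤ 8 * |a' - a| * (1-b) ^ (c-1) * (1-b) :=
    tail_diff hc haexp ha'1 hb2.le hb1.le
  have hga0 : (0:ℝ) < incBeta 1 a c := lt_of_lt_of_le hγ hga
  have hga'0 : (0:ℝ) < incBeta 1 a' c := lt_of_lt_of_le hγ hga'
  have h1bpow : (0:ℝ) ≤ (1-b) ^ (c-1) := Real.rpow_nonneg (by linarith) _
  have hre : regIncBeta b a' c - regIncBeta b a c
      = (Ta * incBeta 1 a' c - Ta' * incBeta 1 a c)
        / (incBeta 1 a c * incBeta 1 a' c) := by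
    rw [regIncBeta, regIncBeta]
    have e1 : incBeta b a c = incBeta 1 a c - Ta := by rw [← hTa]; ring
    have e2 : incBeta b a' c = incBeta 1 a' c - Ta' := by rw [← hTa']; ring
    rw [e1, e2]
    field_simp
    ring
  rw [hre, abs_div]
  have hnum : |Ta * incBeta 1 a' c - Ta' * incBeta 1 a c|
      ≤ 64 * |a' - a| * ((1-b) ^ (c-1) * (1-b)) := by
    have e : Ta * incBeta 1 a' c - Ta' * incBeta 1 a c
        = Ta * (incBeta 1 a' c - incBeta 1 a c) + incBeta 1 a c * (Ta - Ta') := by ring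
    rw [e]
    have h1 : |Ta * (incBeta 1 a' c - incBeta 1 a c)|
        ≤ (2 * (1-b) ^ (c-1) * (1-b)) * (16 * |a' - a|) := by
      rw [abs_mul]
      exact mul_le_mul hTle hgd (abs_nonneg _)
        (mul_nonneg (mul_nonneg (by norm_num) h1bpow) (by linarith))
    have h2 : |incBeta 1 a c * (Ta - Ta')|
        ≤ 4 * (8 * |a' - a| * (1-b) ^ (c-1) * (1-b)) := by
      rw [abs_mul, abs_of_pos hga0, abs_sub_comm]
      exact mul_le_mul hg4 hTd (abs_nonneg _) (by norm_num)
    calc |Ta * (incBeta 1 a' c - incBeta 1 a c) + incBeta 1 a c * (Ta - Ta')|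
        ≤ |Ta * (incBeta 1 a' c - incBeta 1 a c)| + |incBeta 1 a c * (Ta - Ta')| :=
          abs_add_le _ _
    _ ≤ (2 * (1-b) ^ (c-1) * (1-b)) * (16 * |a' - a|)
          + 4 * (8 * |a' - a| * (1-b) ^ (c-1) * (1-b)) := add_le_add h1 h2
    _ = 64 * |a' - a| * ((1-b) ^ (c-1) * (1-b)) := by ring
  have hden : γ ^ 2 ≤ |incBeta 1 a c * incBeta 1 a' c| := by
    rw [abs_of_pos (mul_pos hga0 hga'0)]
    calc γ ^ 2 = γ * γ := sq γ
    _ ≤ incBeta 1 a c * incBeta 1 a' c := mul_le_mul hga hga' hγ.le hga0.le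
  calc |Ta * incBeta 1 a' c - Ta' * incBeta 1 a c| / |incBeta 1 a c * incBeta 1 a' c|
      ≤ (64 * |a' - a| * ((1-b) ^ (c-1) * (1-b))) / γ ^ 2 :=
        div_le_div₀ (mul_nonneg (by positivity) (mul_nonneg h1bpow (by linarith)))
          hnum (by positivity) hden
  _ = 64 / γ ^ 2 * ((1-b) ^ (c-1) * (1-b)) * |a' - a| := by ring

end DFMAux

/-- The magnitude of the Dirichlet conditional vector field vanishes at
the target vertex: `lim_{b → 1⁻} C(b, t) · (1 - b) = 0`. -/
theorem Ccoef_tendsto_zero_at_target_vertex (K : ℕ) (hK : 2 ≤ K) (t : ℝ) (ht : 0 ≤ t) :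
    Tendsto (fun b : ℝ => Ccoef K b t * (1 - b)) (nhdsWithin 1 (Set.Iio 1)) (nhds 0) := by
  have hc : 1 ≤ (K:ℝ) - 1 := by
    have : (2:ℝ) ≤ (K:ℝ) := by exact_mod_cast hK
    linarith
  set c : ℝ := (K:ℝ) - 1 with hcdef
  have hγ : 0 < (1/2:ℝ) ^ (t+1/2) * (1/4:ℝ) ^ (c-1) / 4 := by
    have h1 : (0:ℝ) < (1/2:ℝ) ^ (t+1/2) := Real.rpow_pos_of_pos (by norm_num) _
    have h2 : (0:ℝ) < (1/4:ℝ) ^ (c-1) := Real.rpow_pos_of_pos (by norm_num) _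
    positivity
  set γ : ℝ := (1/2:ℝ) ^ (t+1/2) * (1/4:ℝ) ^ (c-1) / 4 with hγdef
  apply squeeze_zero_norm' (a := fun b : ℝ => (256 / γ ^ 2) * ((1-b) / b ^ t))
  · filter_upwards [Ioo_mem_nhdsLT_of_mem
      (show (1:ℝ) ∈ Set.Ioc (1/2:ℝ) 1 by norm_num)] with b hb
    obtain ⟨hb2, hb1⟩ := hb
    have hb0 : (0:ℝ) < b := by linarith
    have h1b : (0:ℝ) < 1 - b := by linarith
    have hbt : (0:ℝ) < b ^ t := Real.rpow_pos_of_pos hb0 _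
    have hpow : (0:ℝ) < (1-b) ^ (K-1) := pow_pos h1b _
    have h1bpow : (0:ℝ) ≤ (1-b) ^ (c-1) := Real.rpow_nonneg h1b.le _
    have hL : 0 ≤ 64 / γ ^ 2 * ((1-b) ^ (c-1) * (1-b)) := by positivity
    have hIt : |Itilde b (t+1) c| ≤ 64 / γ ^ 2 * ((1-b) ^ (c-1) * (1-b)) := by
      rw [Itilde]
      exact DFMAux.abs_deriv_le_of_lip hL (fun y hy => DFMAux.key_lip hc ht hb2 hb1 hy)
    have hB4 : incBeta 1 (t+1) c ≤ 4 := DFMAux.incBeta_one_le (by linarith) hc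
    have hBγ : γ ≤ incBeta 1 (t+1) c :=
      DFMAux.incBeta_one_ge hc ht (by linarith) (by linarith)
    have hB0 : 0 ≤ incBeta 1 (t+1) c := le_trans hγ.le hBγ
    have hcnat : (1-b) ^ (c-1) * (1-b) = (1-b) ^ (K-1) := by
      have h1 : ((K-1:ℕ):ℝ) = c := by
        rw [Nat.cast_sub (by omega : 1 ≤ K)]; simp [hcdef]
      calc (1-b) ^ (c-1) * (1-b) = (1-b) ^ ((c-1)+1) :=
            (Real.rpow_add_one h1b.ne' (c-1)).symm
      _ = (1-b) ^ c := by norm_num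
      _ = (1-b) ^ (K-1) := by rw [← h1, Real.rpow_natCast]
    have habs : ‖Ccoef K b t * (1-b)‖
        = |Itilde b (t+1) c| * incBeta 1 (t+1) c * (1-b) / ((1-b) ^ (K-1) * b ^ t) := by
      rw [Real.norm_eq_abs, Ccoef, ← hcdef, abs_mul, abs_div, abs_mul, abs_neg,
        abs_of_nonneg hB0, abs_of_pos (mul_pos hpow hbt),
        abs_of_pos h1b]
      ring
    rw [habs]
    have hstep : |Itilde b (t+1) c| * incBeta 1 (t+1) c * (1-b)
        ≤ (64 / γ ^ 2 * ((1-b) ^ (c-1) * (1-b))) * 4 * (1-b) := by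
      have h := mul_le_mul hIt hB4 hB0 hL
      exact mul_le_mul_of_nonneg_right h h1b.le
    calc |Itilde b (t+1) c| * incBeta 1 (t+1) c * (1-b) / ((1-b) ^ (K-1) * b ^ t)
        ≤ (64 / γ ^ 2 * ((1-b) ^ (c-1) * (1-b))) * 4 * (1-b) / ((1-b) ^ (K-1) * b ^ t) :=
          (div_le_div_iff_of_pos_right (mul_pos hpow hbt)).mpr hstep
    _ = 256 / γ ^ 2 * ((1-b) / b ^ t) := by
        rw [hcnat]
        field_simp
        ring
  · have h1 : Tendsto (fun b : ℝ => 1 - b) (nhdsWithin 1 (Set.Iio 1)) (nhds 0) := by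
      have h : Tendsto (fun b : ℝ => 1 - b) (nhds (1:ℝ)) (nhds (1 - 1)) :=
        (continuous_const.sub continuous_id).tendsto 1
      simpa using h.mono_left nhdsWithin_le_nhds
    have h2 : Tendsto (fun b : ℝ => b ^ t) (nhdsWithin 1 (Set.Iio 1)) (nhds 1) := by
      have h : ContinuousAt (fun b : ℝ => b ^ t) 1 :=
        Real.continuousAt_rpow_const 1 t (Or.inl one_ne_zero)
      have h' := h.tendsto
      rw [Real.one_rpow] at h'
      exact h'.mono_left nhdsWithin_le_nhds
    have h3 : Tendsto (fun b : ℝ => (1-b) / b ^ t) (nhdsWithin 1 (Set.Iio 1)) (nhds 0) := by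
      have h4 := h1.div h2 one_ne_zero
      rw [zero_div] at h4
      exact h4
    simpa using h3.const_mul (256 / γ ^ 2)
end

section
/- Let K ≥ 2, let t > 0, and let x ∈ ℝ^K with x_i > 0 for all i. Let D be the K×K diagonal matrix with entries D_{ii} = t/x_i, let 𝟙 ∈ ℝ^K be the all-ones vector, and let P = I − (1/K)·𝟙𝟙ᵀ be the orthogonal projection onto the hyperplane {v : 𝟙ᵀv = 0}. Then for every s ∈ ℝ^K with 𝟙ᵀ s = 0, there exists a unique p ∈ ℝ^K such that P·D·p = s and 𝟙ᵀ p = 1. -/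
private lemma cg_mulVec_iff (K : ℕ) (d p s : Fin K → ℝ) :
    (((1 : Matrix (Fin K) (Fin K) ℝ) - ((K : ℝ))⁻¹ • Matrix.of (fun _ _ => (1 : ℝ))) *
        Matrix.diagonal d).mulVec p = s ↔
    ∀ i, d i * p i - (K : ℝ)⁻¹ * ∑ j, d j * p j = s i := by
  rw [← Matrix.mulVec_mulVec, funext_iff]
  have h : (Matrix.diagonal d).mulVec p = fun i => d i * p i := by
    funext i; simp [Matrix.mulVec_diagonal]
  rw [h]
  simp [Matrix.sub_mulVec, Matrix.smul_mulVec, Matrix.one_mulVec, Matrix.mulVec,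
    dotProduct, Finset.mul_sum, sub_mul, Finset.sum_sub_distrib, Matrix.one_apply,
    ite_mul, Finset.sum_ite_eq]

/-- With `D` the diagonal matrix `D_{ii} = t / x_i` and
`P = I - (1/K)·𝟙𝟙ᵀ` the orthogonal projection onto `{v : 𝟙ᵀv = 0}`, for every `s` with
`𝟙ᵀs = 0` there is a unique `p` with `P·D·p = s` and `𝟙ᵀp = 1`. -/
theorem classifier_guidance_linear_system (K : ℕ) (hK : 2 ≤ K)
    (t : ℝ) (ht : 0 < t) (x : Fin K → ℝ) (hx : ∀ i, 0 < x i)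
    (s : Fin K → ℝ) (hs : ∑ i, s i = 0) :
    ∃! p : Fin K → ℝ,
      (((1 : Matrix (Fin K) (Fin K) ℝ) - ((K : ℝ))⁻¹ • Matrix.of (fun _ _ => (1 : ℝ))) *
          Matrix.diagonal (fun i => t / x i)).mulVec p = s
      ∧ ∑ i, p i = 1 := by
  have hK0 : (0 : ℕ) < K := by omega
  have hKne : (K : ℝ) ≠ 0 := Nat.cast_ne_zero.mpr (by omega)
  have htne : t ≠ 0 := ne_of_gt ht
  have hxne : ∀ i, x i ≠ 0 := fun i => ne_of_gt (hx i)
  haveI : Nonempty (Fin K) := ⟨⟨0, hK0⟩⟩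
  have hS : 0 < ∑ i, x i := Finset.sum_pos (fun i _ => hx i) Finset.univ_nonempty
  have hSne : (∑ i, x i) ≠ 0 := ne_of_gt hS
  set c : ℝ := (t - ∑ i, x i * s i) / (∑ i, x i) with hc
  have hcS : c * ∑ i, x i = t - ∑ i, x i * s i := div_mul_cancel₀ _ hSne
  -- the candidate solution
  set p : Fin K → ℝ := fun i => x i / t * (s i + c) with hp
  have key : ∀ i, (t / x i) * p i = s i + c := by
    intro i
    simp only [hp]
    rw [show t / x i * (x i / t * (s i + c)) = (t / t) * (x i / x i) * (s i + c) by ring,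
      div_self htne, div_self (hxne i), one_mul, one_mul]
  have hsum : ∑ j, (t / x j) * p j = (K : ℝ) * c := by
    simp only [key]
    rw [Finset.sum_add_distrib, hs, zero_add, Finset.sum_const, Finset.card_univ,
      Fintype.card_fin, nsmul_eq_mul]
  -- generic computation of t * ∑ q for q of the given shape
  have tsum : ∀ C : ℝ, t * ∑ i, (x i / t * (s i + C)) = (∑ i, x i * s i) + C * ∑ i, x i := by
    intro C
    rw [Finset.mul_sum, Finset.mul_sum, ← Finset.sum_add_distrib]
    refine Finset.sum_congr rfl fun i _ => ?_
    field_simp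
  have hsump : ∑ i, p i = 1 := by
    have h1 : t * ∑ i, p i = t * 1 := by
      rw [hp, tsum c, hcS, mul_one]; ring
    exact mul_left_cancel₀ htne h1
  refine ⟨p, ⟨(cg_mulVec_iff K _ p s).mpr fun i => ?_, hsump⟩, ?_⟩
  · rw [key i, hsum]
    field_simp
    ring
  · rintro q ⟨hq1, hq2⟩
    rw [cg_mulVec_iff] at hq1
    set C : ℝ := (K : ℝ)⁻¹ * ∑ j, (t / x j) * q j with hC
    have hqi : ∀ i, q i = x i / t * (s i + C) := by
      intro i
      have h2 : (t / x i) * q i = s i + C := by have := hq1 i; linarith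
      rw [← h2, show x i / t * (t / x i * q i) = (t / t) * (x i / x i) * q i by ring,
        div_self htne, div_self (hxne i), one_mul, one_mul]
    have hCc : C = c := by
      have h1 : t * ∑ i, q i = (∑ i, x i * s i) + C * ∑ i, x i := by
        rw [Finset.sum_congr rfl (fun i _ => hqi i)]
        exact tsum C
      rw [hq2, mul_one] at h1
      have h3 : C * ∑ i, x i = t - ∑ i, x i * s i := by linarith
      rw [hc, ← h3, mul_div_cancel_right₀ _ hSne]
    funext i
    rw [hqi i, hCc, hp]
end
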